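/- Let A be an N×N complex matrix with A(i,j) = 0 whenever |i−j| > r (a two-sided band matrix of order r). Then A admits a factorization A = U·R, where U is a unitary matrix of the form U = Ũ_1·Ũ_2⋯Ũ_{N−r+1} (product in increasing order of indices) with embedded factors built from unitary matrices U_k ∈ ℂ^{(r+1)×(r+1)} (k = 1,…,N−r) and a unitary matrix U_{N−r+1} ∈ ℂ^{r×r}, and R is an upper triangular matrix satisfying R(i,j) = 0 whenever j − i > 2r. -/

import Mathlib

open Matrix

noncomputable section

/-- `A(i,j) = 0` whenever `i - j > r` (1-based; identical in 0-based `Fin` indexing). -/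
def IsLowerBand (N r : ℕ) (A : Matrix (Fin N) (Fin N) ℂ) : Prop :=
  ∀ i j : Fin N, (j : ℕ) + r < (i : ℕ) → A i j = 0

/-- `A(i,j) = 0` whenever `j - i > r`. -/
def IsUpperBand (N r : ℕ) (A : Matrix (Fin N) (Fin N) ℂ) : Prop :=
  ∀ i j : Fin N, (i : ℕ) + r < (j : ℕ) → A i j = 0

/-- `rank B(k:N, 1:k+r-1) ≤ r` for every `k = 1, …, N-r` (1-based). -/
def IsLowerGreen (N r : ℕ) (B : Matrix (Fin N) (Fin N) ℂ) : Prop :=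
  ∀ (k : ℕ) (hk1 : 1 ≤ k) (hk2 : k ≤ N - r),
    (B.submatrix
      (fun i : Fin (N - k + 1) => (⟨k - 1 + (i : ℕ), by have := i.isLt; omega⟩ : Fin N))
      (fun j : Fin (k + r - 1) => (⟨(j : ℕ), by have := j.isLt; omega⟩ : Fin N))).rank ≤ r

/-- `rank B(1:k+r-1, k:N) ≤ r` for every `k = 1, …, N-r` (1-based). -/
def IsUpperGreen (N r : ℕ) (B : Matrix (Fin N) (Fin N) ℂ) : Prop :=
  ∀ (k : ℕ) (hk1 : 1 ≤ k) (hk2 : k ≤ N - r),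
    (B.submatrix
      (fun i : Fin (k + r - 1) => (⟨(i : ℕ), by have := i.isLt; omega⟩ : Fin N))
      (fun j : Fin (N - k + 1) => (⟨k - 1 + (j : ℕ), by have := j.isLt; omega⟩ : Fin N))).rank ≤ r

/-- `a^>_{i,s} = a(i-1) a(i-2) ⋯ a(s+1)`, equal to `I_r` when `s ≥ i - 1`. -/
def aGT (r : ℕ) (a : ℕ → Matrix (Fin r) (Fin r) ℂ) (i s : ℕ) :
    Matrix (Fin r) (Fin r) ℂ :=
  (((List.range' (s + 1) (i - 1 - s)).reverse).map a).prod

/-- `p(i) ∈ ℂ^{1×r}` (i = 1,…,N−r), `pLast = p(N−r+1) ∈ ℂ^{r×r}`, `q(j) ∈ ℂ^{r×1}`,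
`a(k) ∈ ℂ^{r×r}` are lower Green generators of the `N×N` matrix `B`:
`B(i,1:r) = p(i)·a^>_{i,0}`, `B(i,r+s-1) = p(i)·a^>_{i,s-1}·q(s-1)` for `2 ≤ s ≤ i ≤ N-r`,
and the analogous identities for the last `r` rows `B(N-r+1:N, ·)` with `pLast`. -/
def IsLowerGreenGenerators (N r : ℕ) (hNr : r < N)
    (p : ℕ → Matrix (Fin 1) (Fin r) ℂ) (q : ℕ → Matrix (Fin r) (Fin 1) ℂ)
    (a : ℕ → Matrix (Fin r) (Fin r) ℂ) (pLast : Matrix (Fin r) (Fin r) ℂ)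
    (B : Matrix (Fin N) (Fin N) ℂ) : Prop :=
  (∀ (i : ℕ) (hi1 : 1 ≤ i) (hi2 : i ≤ N - r) (j : Fin r),
      B ⟨i - 1, by omega⟩ ⟨(j : ℕ), by have := j.isLt; omega⟩ = (p i * aGT r a i 0) 0 j)
  ∧ (∀ (i : ℕ) (hi1 : 1 ≤ i) (hi2 : i ≤ N - r) (s : ℕ) (hs1 : 2 ≤ s) (hs2 : s ≤ i),
      B ⟨i - 1, by omega⟩ ⟨r + s - 2, by omega⟩
        = (p i * aGT r a i (s - 1) * q (s - 1)) 0 0)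
  ∧ (∀ (t : Fin r) (j : Fin r),
      B ⟨N - r + (t : ℕ), by have := t.isLt; omega⟩ ⟨(j : ℕ), by have := j.isLt; omega⟩
        = (pLast * aGT r a (N - r + 1) 0) t j)
  ∧ (∀ (t : Fin r) (s : ℕ) (hs1 : 2 ≤ s) (hs2 : s ≤ N - r + 1),
      B ⟨N - r + (t : ℕ), by have := t.isLt; omega⟩ ⟨r + s - 2, by omega⟩
        = (pLast * aGT r a (N - r + 1) (s - 1) * q (s - 1)) t 0)

/-- The embedded factor `I_{k-1} ⊕ M ⊕ I_{N-k-r}` (1-based block position `k`),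
i.e. `M` occupies (1-based) rows and columns `k, …, k+r` of an `N×N` identity. -/
def embed (N r k : ℕ) (M : Matrix (Fin (r + 1)) (Fin (r + 1)) ℂ) :
    Matrix (Fin N) (Fin N) ℂ :=
  Matrix.of fun i j =>
    if h : k - 1 ≤ (i : ℕ) ∧ (i : ℕ) < k + r ∧ k - 1 ≤ (j : ℕ) ∧ (j : ℕ) < k + r then
      M ⟨(i : ℕ) - (k - 1), by omega⟩ ⟨(j : ℕ) - (k - 1), by omega⟩
    else if (i : ℕ) = (j : ℕ) then 1 else 0

/-- The embedded last factor `I_{N-r} ⊕ M`. -/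
def embedLast (N r : ℕ) (M : Matrix (Fin r) (Fin r) ℂ) : Matrix (Fin N) (Fin N) ℂ :=
  Matrix.of fun i j =>
    if h : N - r ≤ (i : ℕ) ∧ N - r ≤ (j : ℕ) then
      M ⟨(i : ℕ) - (N - r), by have := i.isLt; omega⟩
        ⟨(j : ℕ) - (N - r), by have := j.isLt; omega⟩
    else if (i : ℕ) = (j : ℕ) then 1 else 0

/-- `G̃_1 · G̃_2 ⋯ G̃_{N-r}` (increasing order of indices). -/
def prodAsc (N r : ℕ) (G : ℕ → Matrix (Fin (r + 1)) (Fin (r + 1)) ℂ) :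
    Matrix (Fin N) (Fin N) ℂ :=
  ((List.range' 1 (N - r)).map (fun k => embed N r k (G k))).prod

/-- `G̃_{N-r} · G̃_{N-r-1} ⋯ G̃_1` (decreasing order of indices). -/
def prodDesc (N r : ℕ) (G : ℕ → Matrix (Fin (r + 1)) (Fin (r + 1)) ℂ) :
    Matrix (Fin N) (Fin N) ℂ :=
  (((List.range' 1 (N - r)).reverse).map (fun k => embed N r k (G k))).prod

/-- The `1×r` block `p` of the partition `M = [[p, d], [a, q]]`. -/
def blkP (r : ℕ) (M : Matrix (Fin (r + 1)) (Fin (r + 1)) ℂ) : Matrix (Fin 1) (Fin r) ℂ :=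
  Matrix.of fun _ j => M 0 j.castSucc

/-- The `1×1` block `d` of the partition `M = [[p, d], [a, q]]`. -/
def blkD (r : ℕ) (M : Matrix (Fin (r + 1)) (Fin (r + 1)) ℂ) : ℂ := M 0 (Fin.last r)

/-- The `r×r` block `a` of the partition `M = [[p, d], [a, q]]`. -/
def blkA (r : ℕ) (M : Matrix (Fin (r + 1)) (Fin (r + 1)) ℂ) : Matrix (Fin r) (Fin r) ℂ :=
  Matrix.of fun i j => M i.succ j.castSucc

/-- The `r×1` block `q` of the partition `M = [[p, d], [a, q]]`. -/
def blkQ (r : ℕ) (M : Matrix (Fin (r + 1)) (Fin (r + 1)) ℂ) : Matrix (Fin r) (Fin 1) ℂ :=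
  Matrix.of fun i _ => M i.succ (Fin.last r)

/-- Assemble the `(r+1)×(r+1)` matrix `[[p, d], [a, q]]` from its blocks. -/
def mkBlk (r : ℕ) (p : Matrix (Fin 1) (Fin r) ℂ) (d : ℂ)
    (a : Matrix (Fin r) (Fin r) ℂ) (q : Matrix (Fin r) (Fin 1) ℂ) :
    Matrix (Fin (r + 1)) (Fin (r + 1)) ℂ :=
  Matrix.of fun i j =>
    if hi : (i : ℕ) = 0 then
      if hj : (j : ℕ) < r then p 0 ⟨(j : ℕ), hj⟩ else d
    else
      if hj : (j : ℕ) < r then a ⟨(i : ℕ) - 1, by have := i.isLt; omega⟩ ⟨(j : ℕ), hj⟩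
      else q ⟨(i : ℕ) - 1, by have := i.isLt; omega⟩ 0

/-- The elementary Gauss factor `[[1, 0_{1×r}], [-f, I_r]]`. -/
def elemL (r : ℕ) (f : Matrix (Fin r) (Fin 1) ℂ) :
    Matrix (Fin (r + 1)) (Fin (r + 1)) ℂ :=
  Matrix.of fun i j =>
    if hi : (i : ℕ) = 0 then (if (j : ℕ) = 0 then 1 else 0)
    else if hj : (j : ℕ) = 0 then -f ⟨(i : ℕ) - 1, by have := i.isLt; omega⟩ 0
    else if (i : ℕ) = (j : ℕ) then 1 else 0

/-- The elementary factor `[[I_r, 0_{r×1}], [-g, 1]]`. -/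
def elemLrow (r : ℕ) (g : Matrix (Fin 1) (Fin r) ℂ) :
    Matrix (Fin (r + 1)) (Fin (r + 1)) ℂ :=
  Matrix.of fun i j =>
    if hi : (i : ℕ) < r then
      (if hj : (j : ℕ) < r then (if (i : ℕ) = (j : ℕ) then 1 else 0) else 0)
    else if hj : (j : ℕ) < r then -g 0 ⟨(j : ℕ), hj⟩ else 1

/-- All leading principal minors are nonzero. -/
def StronglyRegular (N : ℕ) (A : Matrix (Fin N) (Fin N) ℂ) : Prop :=
  ∀ (k : ℕ) (hk : k ≤ N), 1 ≤ k →
    (A.submatrix (Fin.castLE hk) (Fin.castLE hk)).det ≠ 0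

lemma qr_left (n : ℕ) (B : Matrix (Fin n) (Fin n) ℂ) :
    ∃ Q ∈ Matrix.unitaryGroup (Fin n) ℂ,
      ∀ i j : Fin n, (j : ℕ) < (i : ℕ) → (Q * B) i j = 0 := by
  classical
  set f : Fin n → EuclideanSpace ℂ (Fin n) := fun j => WithLp.toLp 2 (fun l => B l j) with hf
  have h : Module.finrank ℂ (EuclideanSpace ℂ (Fin n)) = Fintype.card (Fin n) := by simp
  haveI : WellFoundedLT (Fin n) := inferInstance
  set b := InnerProductSpace.gramSchmidtOrthonormalBasis (𝕜 := ℂ) (f := f) h with hb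
  set Q : Matrix (Fin n) (Fin n) ℂ := Matrix.of fun i l => (starRingEnd ℂ) (b i l) with hQ
  have hQB : ∀ i j : Fin n, (Q * B) i j = inner ℂ (b i) (f j) := by
    intro i j
    rw [Matrix.mul_apply, PiLp.inner_apply]
    simp [hQ, RCLike.inner_apply, hf, mul_comm]
  refine ⟨Q, ?_, ?_⟩
  · rw [Matrix.mem_unitaryGroup_iff]
    ext i k
    rw [Matrix.mul_apply, Matrix.one_apply]
    have := (b.orthonormal).2 (i := i) (j := k)
    have h2 : (inner ℂ (b i) (b k) : ℂ) = if i = k then 1 else 0 := by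
      rcases eq_or_ne i k with rfl | hne
      · simp [b.orthonormal.1 i, inner_self_eq_norm_sq_to_K]
      · simp [hne, b.orthonormal.2 hne]
    rw [← h2, PiLp.inner_apply]
    simp [hQ, RCLike.inner_apply, Matrix.star_eq_conjTranspose, Matrix.conjTranspose_apply,
      mul_comm]
  · intro i j hij
    rw [hQB]
    exact InnerProductSpace.gramSchmidtOrthonormalBasis_inv_triangular h f (by exact Fin.lt_def.mpr hij)

lemma householder (n : ℕ) (v : Fin (n + 1) → ℂ) :
    ∃ W ∈ Matrix.unitaryGroup (Fin (n + 1)) ℂ,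
      ∀ i : Fin (n + 1), i ≠ 0 → ∑ l, W i l * v l = 0 := by
  obtain ⟨Q, hQ, hQt⟩ := qr_left (n + 1) (Matrix.of fun l _ => v l)
  refine ⟨Q, hQ, fun i hi => ?_⟩
  have := hQt i 0 (Fin.lt_def.mp (Fin.pos_iff_ne_zero.mpr hi))
  simpa [Matrix.mul_apply] using this

lemma embed_mul_apply (N r k : ℕ) (hk1 : 1 ≤ k) (hk2 : k + r ≤ N)
    (M : Matrix (Fin (r + 1)) (Fin (r + 1)) ℂ) (B : Matrix (Fin N) (Fin N) ℂ) (i j : Fin N) :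
    (embed N r k M * B) i j =
      if h : k - 1 ≤ (i : ℕ) ∧ (i : ℕ) < k + r then
        ∑ t : Fin (r + 1), M ⟨(i : ℕ) - (k - 1), by omega⟩ t *
          B ⟨k - 1 + (t : ℕ), by have := t.isLt; omega⟩ j
      else B i j := by
  classical
  rw [Matrix.mul_apply]
  by_cases hi : k - 1 ≤ (i : ℕ) ∧ (i : ℕ) < k + r
  · rw [dif_pos hi]
    set e : Fin (r + 1) → Fin N :=
      fun t => ⟨k - 1 + (t : ℕ), by have := t.isLt; omega⟩ with he
    have hinj : Function.Injective e := by
      intro a b hab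
      have : k - 1 + (a : ℕ) = k - 1 + (b : ℕ) := congrArg Fin.val hab
      exact Fin.ext (by omega)
    have hvan : ∀ l : Fin N, l ∈ Finset.univ → l ∉ Finset.image e Finset.univ →
        embed N r k M i l * B l j = 0 := by
      intro l _ hl
      have hlw : ¬(k - 1 ≤ (l : ℕ) ∧ (l : ℕ) < k + r) := by
        intro hw
        refine hl (Finset.mem_image.mpr ⟨⟨(l : ℕ) - (k - 1), by omega⟩, Finset.mem_univ _, ?_⟩)
        exact Fin.ext (by show k - 1 + ((l : ℕ) - (k - 1)) = (l : ℕ); omega)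
      have hz : embed N r k M i l = 0 := by
        unfold embed
        simp only [Matrix.of_apply]
        rw [dif_neg (by tauto)]
        have : (i : ℕ) ≠ (l : ℕ) := by omega
        simp [this]
      rw [hz, zero_mul]
    rw [← Finset.sum_subset (Finset.subset_univ (Finset.image e Finset.univ)) hvan,
        Finset.sum_image (fun a _ b _ h => hinj h)]
    refine Finset.sum_congr rfl fun t _ => ?_
    congr 1
    unfold embed
    simp only [Matrix.of_apply]
    rw [dif_pos ⟨hi.1, hi.2, show k - 1 ≤ k - 1 + (t : ℕ) from Nat.le_add_right _ _, show k - 1 + (t : ℕ) < k + r by have := t.isLt; omega⟩]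
    congr 1
    exact Fin.ext (by show k - 1 + (t : ℕ) - (k - 1) = (t : ℕ); omega)
  · rw [dif_neg hi]
    have hrow : ∀ l : Fin N, embed N r k M i l = if i = l then 1 else 0 := by
      intro l
      unfold embed
      simp only [Matrix.of_apply]
      rw [dif_neg (by tauto)]
      simp [Fin.ext_iff]
    simp_rw [hrow, ite_mul, one_mul, zero_mul]
    rw [Finset.sum_ite_eq Finset.univ i (fun l => B l j)]
    simp

lemma embedLast_mul_apply (N r : ℕ) (hr : r ≤ N)
    (M : Matrix (Fin r) (Fin r) ℂ) (B : Matrix (Fin N) (Fin N) ℂ) (i j : Fin N) :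
    (embedLast N r M * B) i j =
      if h : N - r ≤ (i : ℕ) then
        ∑ t : Fin r, M ⟨(i : ℕ) - (N - r), by have := i.isLt; omega⟩ t *
          B ⟨N - r + (t : ℕ), by have := t.isLt; omega⟩ j
      else B i j := by
  classical
  rw [Matrix.mul_apply]
  by_cases hi : N - r ≤ (i : ℕ)
  · rw [dif_pos hi]
    set e : Fin r → Fin N :=
      fun t => ⟨N - r + (t : ℕ), by have := t.isLt; omega⟩ with he
    have hinj : Function.Injective e := by
      intro a b hab
      have : N - r + (a : ℕ) = N - r + (b : ℕ) := congrArg Fin.val hab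
      exact Fin.ext (by omega)
    have hvan : ∀ l : Fin N, l ∈ Finset.univ → l ∉ Finset.image e Finset.univ →
        embedLast N r M i l * B l j = 0 := by
      intro l _ hl
      have hlw : ¬(N - r ≤ (l : ℕ)) := by
        intro hw
        refine hl (Finset.mem_image.mpr ⟨⟨(l : ℕ) - (N - r), by have := l.isLt; omega⟩,
          Finset.mem_univ _, Fin.ext (by show N - r + ((l : ℕ) - (N - r)) = (l : ℕ); omega)⟩)
      have hz : embedLast N r M i l = 0 := by
        unfold embedLast
        simp only [Matrix.of_apply]
        rw [dif_neg (by tauto)]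
        have : (i : ℕ) ≠ (l : ℕ) := by omega
        simp [this]
      rw [hz, zero_mul]
    rw [← Finset.sum_subset (Finset.subset_univ (Finset.image e Finset.univ)) hvan,
        Finset.sum_image (fun a _ b _ h => hinj h)]
    refine Finset.sum_congr rfl fun t _ => ?_
    congr 1
    unfold embedLast
    simp only [Matrix.of_apply]
    rw [dif_pos ⟨hi, show N - r ≤ N - r + (t : ℕ) from Nat.le_add_right _ _⟩]
    congr 1
    exact Fin.ext (by show N - r + (t : ℕ) - (N - r) = (t : ℕ); omega)
  · rw [dif_neg hi]
    have hrow : ∀ l : Fin N, embedLast N r M i l = if i = l then 1 else 0 := by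
      intro l
      unfold embedLast
      simp only [Matrix.of_apply]
      rw [dif_neg (by tauto)]
      simp [Fin.ext_iff]
    simp_rw [hrow, ite_mul, one_mul, zero_mul]
    rw [Finset.sum_ite_eq Finset.univ i (fun l => B l j)]
    simp

lemma embed_mul (N r k : ℕ) (hk1 : 1 ≤ k) (hk2 : k + r ≤ N)
    (M1 M2 : Matrix (Fin (r + 1)) (Fin (r + 1)) ℂ) :
    embed N r k M1 * embed N r k M2 = embed N r k (M1 * M2) := by
  ext i j
  rw [embed_mul_apply N r k hk1 hk2]
  by_cases hi : k - 1 ≤ (i : ℕ) ∧ (i : ℕ) < k + r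
  · rw [dif_pos hi]
    by_cases hj : k - 1 ≤ (j : ℕ) ∧ (j : ℕ) < k + r
    · have hRHS : embed N r k (M1 * M2) i j =
          (M1 * M2) ⟨(i : ℕ) - (k - 1), by omega⟩ ⟨(j : ℕ) - (k - 1), by omega⟩ := by
        unfold embed; simp only [Matrix.of_apply]
        rw [dif_pos ⟨hi.1, hi.2, hj.1, hj.2⟩]
      rw [hRHS, Matrix.mul_apply]
      refine Finset.sum_congr rfl fun t _ => ?_
      congr 1
      unfold embed; simp only [Matrix.of_apply]
      rw [dif_pos ⟨show k - 1 ≤ k - 1 + (t : ℕ) from Nat.le_add_right _ _,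
        show k - 1 + (t : ℕ) < k + r by have := t.isLt; omega, hj.1, hj.2⟩]
      congr 1
      exact Fin.ext (by show k - 1 + (t : ℕ) - (k - 1) = (t : ℕ); omega)
    · have h1 : ∀ t : Fin (r + 1),
          embed N r k M2 ⟨k - 1 + (t : ℕ), by have := t.isLt; omega⟩ j = 0 := by
        intro t
        unfold embed; simp only [Matrix.of_apply]
        rw [dif_neg (by tauto)]
        have : k - 1 + (t : ℕ) ≠ (j : ℕ) := by
          rcases Nat.lt_or_ge (j : ℕ) (k - 1) with h | h
          · omega
          · have : ¬ (j : ℕ) < k + r := by tauto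
            have := t.isLt; omega
        simp [this]
      rw [Finset.sum_congr rfl (fun t _ => by rw [h1 t, mul_zero]), Finset.sum_const_zero]
      unfold embed; simp only [Matrix.of_apply]
      rw [dif_neg (by tauto)]
      have : (i : ℕ) ≠ (j : ℕ) := by
        rcases Nat.lt_or_ge (j : ℕ) (k - 1) with h | h
        · omega
        · have : ¬ (j : ℕ) < k + r := by tauto
          omega
      simp [this]
  · rw [dif_neg hi]
    unfold embed
    simp only [Matrix.of_apply]
    rw [dif_neg (by tauto), dif_neg (by tauto)]

lemma embed_one (N r k : ℕ) (hk1 : 1 ≤ k) : embed N r k (1 : Matrix (Fin (r + 1)) (Fin (r + 1)) ℂ) = 1 := by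
  ext i j
  unfold embed
  simp only [Matrix.of_apply]
  by_cases h : k - 1 ≤ (i : ℕ) ∧ (i : ℕ) < k + r ∧ k - 1 ≤ (j : ℕ) ∧ (j : ℕ) < k + r
  · rw [dif_pos h, Matrix.one_apply, Matrix.one_apply]
    by_cases hij : i = j
    · subst hij; simp
    · have h1 : ((⟨(i : ℕ) - (k - 1), by omega⟩ : Fin (r + 1)) =
          ⟨(j : ℕ) - (k - 1), by omega⟩) ↔ False := by
        simp only [Fin.ext_iff, iff_false]
        intro hc
        exact hij (Fin.ext (by omega))
      simp [h1, hij]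
  · rw [dif_neg h, Matrix.one_apply]
    simp [Fin.ext_iff]

lemma embed_conjTranspose (N r k : ℕ) (M : Matrix (Fin (r + 1)) (Fin (r + 1)) ℂ) :
    (embed N r k M)ᴴ = embed N r k Mᴴ := by
  ext i j
  rw [Matrix.conjTranspose_apply]
  unfold embed
  simp only [Matrix.of_apply]
  by_cases h : k - 1 ≤ (i : ℕ) ∧ (i : ℕ) < k + r ∧ k - 1 ≤ (j : ℕ) ∧ (j : ℕ) < k + r
  · rw [dif_pos ⟨h.2.2.1, h.2.2.2, h.1, h.2.1⟩, dif_pos h, Matrix.conjTranspose_apply]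
  · rw [dif_neg (by tauto), dif_neg h]
    split <;> rename_i hij
    · simp [hij.symm]
    · rw [if_neg (fun hc => hij hc.symm), star_zero]

lemma embed_mem_unitary (N r k : ℕ) (hk1 : 1 ≤ k) (hk2 : k + r ≤ N)
    (M : Matrix (Fin (r + 1)) (Fin (r + 1)) ℂ) (hM : M ∈ Matrix.unitaryGroup (Fin (r + 1)) ℂ) :
    embed N r k M ∈ Matrix.unitaryGroup (Fin N) ℂ := by
  rw [Matrix.mem_unitaryGroup_iff]
  rw [Matrix.star_eq_conjTranspose, embed_conjTranspose, embed_mul N r k hk1 hk2]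
  have : M * Mᴴ = 1 := by
    have := Matrix.mem_unitaryGroup_iff.mp hM
    rwa [Matrix.star_eq_conjTranspose] at this
  rw [this, embed_one N r k hk1]

lemma embedLast_mul (N r : ℕ) (hr : r ≤ N) (M1 M2 : Matrix (Fin r) (Fin r) ℂ) :
    embedLast N r M1 * embedLast N r M2 = embedLast N r (M1 * M2) := by
  ext i j
  rw [embedLast_mul_apply N r hr]
  by_cases hi : N - r ≤ (i : ℕ)
  · rw [dif_pos hi]
    by_cases hj : N - r ≤ (j : ℕ)
    · have hRHS : embedLast N r (M1 * M2) i j =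
          (M1 * M2) ⟨(i : ℕ) - (N - r), by have := i.isLt; omega⟩
            ⟨(j : ℕ) - (N - r), by have := j.isLt; omega⟩ := by
        unfold embedLast; simp only [Matrix.of_apply]
        rw [dif_pos ⟨hi, hj⟩]
      rw [hRHS, Matrix.mul_apply]
      refine Finset.sum_congr rfl fun t _ => ?_
      congr 1
      unfold embedLast; simp only [Matrix.of_apply]
      rw [dif_pos ⟨show N - r ≤ N - r + (t : ℕ) from Nat.le_add_right _ _, hj⟩]
      congr 1
      exact Fin.ext (by show N - r + (t : ℕ) - (N - r) = (t : ℕ); omega)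
    · have h1 : ∀ t : Fin r,
          embedLast N r M2 ⟨N - r + (t : ℕ), by have := t.isLt; omega⟩ j = 0 := by
        intro t
        unfold embedLast; simp only [Matrix.of_apply]
        rw [dif_neg (by tauto)]
        have : N - r + (t : ℕ) ≠ (j : ℕ) := by omega
        simp [this]
      rw [Finset.sum_congr rfl (fun t _ => by rw [h1 t, mul_zero]), Finset.sum_const_zero]
      unfold embedLast; simp only [Matrix.of_apply]
      rw [dif_neg (by tauto)]
      have : (i : ℕ) ≠ (j : ℕ) := by omega
      simp [this]
  · rw [dif_neg hi]
    unfold embedLast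
    simp only [Matrix.of_apply]
    rw [dif_neg (by tauto), dif_neg (by tauto)]

lemma embedLast_one (N r : ℕ) : embedLast N r (1 : Matrix (Fin r) (Fin r) ℂ) = 1 := by
  ext i j
  unfold embedLast
  simp only [Matrix.of_apply]
  by_cases h : N - r ≤ (i : ℕ) ∧ N - r ≤ (j : ℕ)
  · rw [dif_pos h, Matrix.one_apply, Matrix.one_apply]
    by_cases hij : i = j
    · subst hij; simp
    · have h1 : ((⟨(i : ℕ) - (N - r), by have := i.isLt; omega⟩ : Fin r) =
          ⟨(j : ℕ) - (N - r), by have := j.isLt; omega⟩) ↔ False := by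
        simp only [Fin.ext_iff, iff_false]
        intro hc
        exact hij (Fin.ext (by omega))
      simp [h1, hij]
  · rw [dif_neg h, Matrix.one_apply]
    simp [Fin.ext_iff]

lemma embedLast_conjTranspose (N r : ℕ) (M : Matrix (Fin r) (Fin r) ℂ) :
    (embedLast N r M)ᴴ = embedLast N r Mᴴ := by
  ext i j
  rw [Matrix.conjTranspose_apply]
  unfold embedLast
  simp only [Matrix.of_apply]
  by_cases h : N - r ≤ (i : ℕ) ∧ N - r ≤ (j : ℕ)
  · rw [dif_pos ⟨h.2, h.1⟩, dif_pos h, Matrix.conjTranspose_apply]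
  · rw [dif_neg (by tauto), dif_neg h]
    split <;> rename_i hij
    · simp [hij.symm]
    · rw [if_neg (fun hc => hij hc.symm), star_zero]

lemma embedLast_mem_unitary (N r : ℕ) (hr : r ≤ N)
    (M : Matrix (Fin r) (Fin r) ℂ) (hM : M ∈ Matrix.unitaryGroup (Fin r) ℂ) :
    embedLast N r M ∈ Matrix.unitaryGroup (Fin N) ℂ := by
  rw [Matrix.mem_unitaryGroup_iff]
  rw [Matrix.star_eq_conjTranspose, embedLast_conjTranspose, embedLast_mul N r hr]
  have : M * Mᴴ = 1 := by
    have := Matrix.mem_unitaryGroup_iff.mp hM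
    rwa [Matrix.star_eq_conjTranspose] at this
  rw [this, embedLast_one]

lemma prod_telescope {α : Type*} {M : Type*} [Monoid M] :
    ∀ (l : List α) (f g : α → M), (∀ a ∈ l, f a * g a = 1) →
      (l.map f).prod * ((l.reverse).map g).prod = 1 := by
  intro l
  induction l with
  | nil => intro f g _; simp
  | cons a t ih =>
    intro f g h
    have ht := ih f g (fun x hx => h x (List.mem_cons_of_mem a hx))
    simp only [List.map_cons, List.prod_cons, List.reverse_cons, List.map_append,
      List.prod_append, List.map_cons, List.prod_cons, List.map_nil, List.prod_nil, mul_one]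
    calc f a * (t.map f).prod * ((t.reverse.map g).prod * g a)
        = f a * ((t.map f).prod * (t.reverse.map g).prod) * g a := by
          rw [mul_assoc, mul_assoc, mul_assoc]
      _ = f a * g a := by rw [ht, mul_one]
      _ = 1 := h a List.mem_cons_self

def hhW (n : ℕ) (v : Fin (n + 1) → ℂ) : Matrix (Fin (n + 1)) (Fin (n + 1)) ℂ :=
  (householder n v).choose

lemma hhW_unitary (n : ℕ) (v : Fin (n + 1) → ℂ) :
    hhW n v ∈ Matrix.unitaryGroup (Fin (n + 1)) ℂ :=
  (householder n v).choose_spec.1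

lemma hhW_zero (n : ℕ) (v : Fin (n + 1) → ℂ) (i : Fin (n + 1)) (hi : i ≠ 0) :
    ∑ l, hhW n v i l * v l = 0 :=
  (householder n v).choose_spec.2 i hi

def winCol (N r : ℕ) (M : Matrix (Fin N) (Fin N) ℂ) (k : ℕ) : Fin (r + 1) → ℂ :=
  fun t => if h : k - 1 + (t : ℕ) < N ∧ k - 1 < N then M ⟨k - 1 + (t : ℕ), h.1⟩ ⟨k - 1, h.2⟩ else 0

def elimM (N r : ℕ) (A : Matrix (Fin N) (Fin N) ℂ) : ℕ → Matrix (Fin N) (Fin N) ℂ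
  | 0 => A
  | k + 1 => embed N r (k + 1) (hhW r (winCol N r (elimM N r A k) (k + 1))) * elimM N r A k

def elimW (N r : ℕ) (A : Matrix (Fin N) (Fin N) ℂ) (k : ℕ) :
    Matrix (Fin (r + 1)) (Fin (r + 1)) ℂ :=
  hhW r (winCol N r (elimM N r A (k - 1)) k)

lemma elimM_succ (N r : ℕ) (A : Matrix (Fin N) (Fin N) ℂ) (k : ℕ) :
    elimM N r A (k + 1) = embed N r (k + 1) (elimW N r A (k + 1)) * elimM N r A k := rfl

lemma elimW_unitary (N r : ℕ) (A : Matrix (Fin N) (Fin N) ℂ) (k : ℕ) :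
    elimW N r A k ∈ Matrix.unitaryGroup (Fin (r + 1)) ℂ := hhW_unitary _ _

lemma elim_invariant (N r : ℕ) (hr : 0 < r) (hNr : r < N) (A : Matrix (Fin N) (Fin N) ℂ)
    (hband : ∀ i j : Fin N, ((j : ℕ) + r < (i : ℕ) ∨ (i : ℕ) + r < (j : ℕ)) → A i j = 0) :
    ∀ k, k ≤ N - r →
      (∀ i j : Fin N, (j : ℕ) < k → (j : ℕ) < (i : ℕ) → elimM N r A k i j = 0) ∧
      (∀ i j : Fin N, k + r ≤ (i : ℕ) → elimM N r A k i j = A i j) ∧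
      (∀ i j : Fin N, (i : ℕ) < k + r → min (i : ℕ) k + 2 * r < (j : ℕ) →
        elimM N r A k i j = 0) := by
  intro k
  induction k with
  | zero =>
    intro _
    refine ⟨fun i j h _ => absurd h (Nat.not_lt_zero _), fun i j _ => rfl, fun i j hi hj => ?_⟩
    exact hband i j (Or.inr (by omega))
  | succ k ih =>
    intro hk
    obtain ⟨ihA, ihB, ihC⟩ := ih (by omega)
    set M := elimM N r A k with hM
    set W := elimW N r A (k + 1) with hWdef
    have hk2 : (k + 1) + r ≤ N := by omega
    have hrow : ∀ i j : Fin N, elimM N r A (k + 1) i j =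
        if h : k ≤ (i : ℕ) ∧ (i : ℕ) < k + 1 + r then
          ∑ t : Fin (r + 1), W ⟨(i : ℕ) - k, by omega⟩ t *
            M ⟨k + (t : ℕ), by have := t.isLt; omega⟩ j
        else M i j := by
      intro i j
      rw [elimM_succ, embed_mul_apply N r (k + 1) (by omega) hk2]
      simp only [Nat.add_sub_cancel]
      rfl
    have hwc : ∀ t : Fin (r + 1), winCol N r M (k + 1) t =
        M ⟨k + (t : ℕ), by have := t.isLt; omega⟩ ⟨k, by omega⟩ := by
      intro t
      unfold winCol
      rw [dif_pos (by constructor <;> (simp only [Nat.add_sub_cancel]; have := t.isLt; omega))]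
      simp only [Nat.add_sub_cancel]
    have hW : ∀ s : Fin (r + 1), s ≠ 0 →
        ∑ t : Fin (r + 1), W s t * M ⟨k + (t : ℕ), by have := t.isLt; omega⟩ ⟨k, by omega⟩ = 0 := by
      intro s hs
      have := hhW_zero r (winCol N r M (k + 1)) s hs
      rw [Finset.sum_congr rfl (fun t _ => by rw [hwc t])] at this
      exact this
    refine ⟨?_, ?_, ?_⟩
    · -- (a)
      intro i j hj hji
      rw [hrow]
      by_cases hi : k ≤ (i : ℕ) ∧ (i : ℕ) < k + 1 + r
      · rw [dif_pos hi]
        rcases Nat.lt_or_ge (j : ℕ) k with hjk | hjk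
        · refine Finset.sum_eq_zero fun t _ => ?_
          rw [ihA _ j (by omega) (by simp; omega), mul_zero]
        · have hjk' : (j : ℕ) = k := by omega
          have hj' : j = (⟨k, by omega⟩ : Fin N) := Fin.ext hjk'
          have hs : (⟨(i : ℕ) - k, by omega⟩ : Fin (r + 1)) ≠ 0 := by
            simp only [ne_eq, Fin.ext_iff, Fin.val_zero]
            omega
          rw [hj']
          exact hW _ hs
      · rw [dif_neg hi]
        rcases Nat.lt_or_ge (i : ℕ) k with hik | hik
        · exact ihA i j (by omega) hji
        · have hik' : k + 1 + r ≤ (i : ℕ) := by omega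
          rw [ihB i j (by omega)]
          exact hband i j (Or.inl (by omega))
    · -- (b)
      intro i j hi
      rw [hrow, dif_neg (by omega)]
      exact ihB i j (by omega)
    · -- (c)
      intro i j hi hj
      rw [hrow]
      by_cases hiw : k ≤ (i : ℕ) ∧ (i : ℕ) < k + 1 + r
      · rw [dif_pos hiw]
        have hjk : k + 2 * r < (j : ℕ) := by omega
        refine Finset.sum_eq_zero fun t _ => ?_
        rcases Nat.lt_or_ge (t : ℕ) r with ht | ht
        · rw [ihC _ j (by simp; omega) (by simp; omega), mul_zero]
        · have ht' : (t : ℕ) = r := by have := t.isLt; omega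
          rw [ihB _ j (by simp; omega), hband _ j (Or.inr (by simp; omega)), mul_zero]
      · rw [dif_neg hiw]
        have hik : (i : ℕ) < k := by omega
        exact ihC i j (by omega) (by omega)

lemma elimM_eq_prod (N r : ℕ) (A : Matrix (Fin N) (Fin N) ℂ) (k : ℕ) :
    elimM N r A k =
      (((List.range' 1 k).reverse).map (fun m => embed N r m (elimW N r A m))).prod * A := by
  induction k with
  | zero => simp [elimM]
  | succ k ih =>
    rw [elimM_succ, ih, List.range'_concat]
    have h1 : 1 + 1 * k = k + 1 := by omega
    rw [h1, List.reverse_append, List.reverse_cons, List.reverse_nil, List.nil_append,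
      List.singleton_append, List.map_cons, List.prod_cons, mul_assoc]

/-- Every two-sided band matrix `A` of order `r` admits a factorization `A = U·R` with `U`
a product of embedded unitary factors and `R` upper triangular and upper band of order `2r`. -/
theorem twoSidedBand_qr (N r : ℕ) (hr : 0 < r) (hNr : r < N)
    (A : Matrix (Fin N) (Fin N) ℂ)
    (hband : ∀ i j : Fin N, ((j : ℕ) + r < (i : ℕ) ∨ (i : ℕ) + r < (j : ℕ)) → A i j = 0) :
    ∃ (Uk : ℕ → Matrix (Fin (r + 1)) (Fin (r + 1)) ℂ)
      (Ulast : Matrix (Fin r) (Fin r) ℂ) (R : Matrix (Fin N) (Fin N) ℂ),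
      (∀ (k : ℕ), 1 ≤ k → k ≤ N - r → Uk k ∈ Matrix.unitaryGroup (Fin (r + 1)) ℂ) ∧
      Ulast ∈ Matrix.unitaryGroup (Fin r) ℂ ∧
      (prodAsc N r Uk * embedLast N r Ulast) ∈ Matrix.unitaryGroup (Fin N) ℂ ∧
      (∀ i j : Fin N, (j : ℕ) < (i : ℕ) → R i j = 0) ∧
      (∀ i j : Fin N, (i : ℕ) + 2 * r < (j : ℕ) → R i j = 0) ∧
      A = (prodAsc N r Uk * embedLast N r Ulast) * R := by
  classical
  have hrN : r ≤ N := le_of_lt hNr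
  obtain ⟨hA, hB, hC⟩ := elim_invariant N r hr hNr A hband (N - r) le_rfl
  set M := elimM N r A (N - r) with hMdef
  set Bot : Matrix (Fin r) (Fin r) ℂ := Matrix.of fun s t =>
    M ⟨N - r + (s : ℕ), by have := s.isLt; omega⟩
      ⟨N - r + (t : ℕ), by have := t.isLt; omega⟩ with hBot
  obtain ⟨Q, hQu, hQt⟩ := qr_left r Bot
  refine ⟨fun k => (elimW N r A k)ᴴ, Qᴴ, embedLast N r Q * M, ?_, ?_, ?_, ?_, ?_, ?_⟩
  · intro k _ _
    show (elimW N r A k)ᴴ ∈ Matrix.unitaryGroup (Fin (r + 1)) ℂ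
    rw [← Matrix.star_eq_conjTranspose]
    exact Unitary.star_mem (elimW_unitary N r A k)
  · rw [← Matrix.star_eq_conjTranspose]
    exact Unitary.star_mem hQu
  · refine mul_mem ?_ (embedLast_mem_unitary N r hrN _ ?_)
    · refine Submonoid.list_prod_mem _ ?_
      intro x hx
      obtain ⟨m, hm, rfl⟩ := List.mem_map.mp hx
      obtain ⟨h1, h2⟩ := List.mem_range'_1.mp hm
      refine embed_mem_unitary N r m h1 (by omega) _ ?_
      show (elimW N r A m)ᴴ ∈ Matrix.unitaryGroup (Fin (r + 1)) ℂ
      rw [← Matrix.star_eq_conjTranspose]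
      exact Unitary.star_mem (elimW_unitary N r A m)
    · rw [← Matrix.star_eq_conjTranspose]
      exact Unitary.star_mem hQu
  · -- lower triangular
    intro i j hji
    rw [embedLast_mul_apply N r hrN]
    by_cases hi : N - r ≤ (i : ℕ)
    · rw [dif_pos hi]
      by_cases hj : N - r ≤ (j : ℕ)
      · have key : ∀ t : Fin r, M ⟨N - r + (t : ℕ), by have := t.isLt; omega⟩ j =
            Bot t ⟨(j : ℕ) - (N - r), by have := j.isLt; omega⟩ := by
          intro t
          simp only [hBot, Matrix.of_apply]
          congr 1
          exact Fin.ext (by show (j : ℕ) = N - r + ((j : ℕ) - (N - r)); omega)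
        rw [Finset.sum_congr rfl (fun t _ => by rw [key t])]
        have := hQt ⟨(i : ℕ) - (N - r), by have := i.isLt; omega⟩
          ⟨(j : ℕ) - (N - r), by have := j.isLt; omega⟩ (by show (j:ℕ) - (N-r) < (i:ℕ) - (N-r); omega)
        rw [Matrix.mul_apply] at this
        exact this
      · refine Finset.sum_eq_zero fun t _ => ?_
        rw [hA _ j (by omega) (by show (j : ℕ) < N - r + (t : ℕ); omega), mul_zero]
    · rw [dif_neg hi]
      exact hA i j (by omega) hji
  · -- upper band 2r
    intro i j hij
    rw [embedLast_mul_apply N r hrN]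
    have hjN := j.isLt
    by_cases hi : N - r ≤ (i : ℕ)
    · exact absurd hjN (by omega)
    · rw [dif_neg hi]
      exact hC i j (by omega) (by omega)
  · -- factorization
    have htel : prodAsc N r (fun k => (elimW N r A k)ᴴ) *
        (((List.range' 1 (N - r)).reverse).map (fun m => embed N r m (elimW N r A m))).prod
          = 1 := by
      refine prod_telescope (List.range' 1 (N - r)) _ _ ?_
      intro m hm
      obtain ⟨h1, h2⟩ := List.mem_range'_1.mp hm
      rw [embed_mul N r m h1 (by omega)]
      have hu : (elimW N r A m)ᴴ * elimW N r A m = 1 := by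
        have := Matrix.mem_unitaryGroup_iff'.mp (elimW_unitary N r A m)
        rwa [Matrix.star_eq_conjTranspose] at this
      rw [hu, embed_one N r m h1]
    have hQQ : embedLast N r Qᴴ * embedLast N r Q = 1 := by
      rw [embedLast_mul N r hrN]
      have hu : Qᴴ * Q = 1 := by
        have := Matrix.mem_unitaryGroup_iff'.mp hQu
        rwa [Matrix.star_eq_conjTranspose] at this
      rw [hu, embedLast_one]
    symm
    calc prodAsc N r (fun k => (elimW N r A k)ᴴ) * embedLast N r Qᴴ * (embedLast N r Q * M)
        = prodAsc N r (fun k => (elimW N r A k)ᴴ) * ((embedLast N r Qᴴ * embedLast N r Q) * M) := by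
          rw [mul_assoc, mul_assoc]
      _ = prodAsc N r (fun k => (elimW N r A k)ᴴ) * M := by rw [hQQ, one_mul]
      _ = A := by
          rw [hMdef, elimM_eq_prod, ← mul_assoc, htel, one_mul]
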